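/- For all natural numbers n, m \geq 1 and every natural number i, the following identity of integers holds: \sum_{\substack{j + l = i + 2 \\ j, l \geq 1}} \binom{n}{j} \binom{m}{l} = \sum_{j=1}^{i+1} (-1)^j \left( \binom{n}{j+1} + \binom{m}{j+1} \right) \binom{n + m - j - 1}{i - j + 1} + (i+1) \binom{n+m}{i+2}. -/

import Mathlib

open Finset

lemma aux_alt (a s : ℕ) :
    ∑ j ∈ Finset.range (s + 1), (-1 : ℤ) ^ j * (a.choose j : ℤ) * ((a - j).choose (s - j) : ℤ)
      = if s = 0 then 1 else 0 := by
  have h1 : ∀ j ∈ Finset.range (s + 1),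
      (-1 : ℤ) ^ j * (a.choose j : ℤ) * ((a - j).choose (s - j) : ℤ)
        = (a.choose s : ℤ) * ((-1 : ℤ) ^ j * (s.choose j : ℤ)) := by
    intro j hj
    rw [Finset.mem_range] at hj
    have hjs : j ≤ s := Nat.lt_succ_iff.mp hj
    have key : (a.choose j) * ((a - j).choose (s - j)) = a.choose s * s.choose j := by
      rcases le_or_gt s a with hsa | has
      · exact ((Nat.choose_mul hjs)).symm
      · rcases le_or_gt j a with hja | haj
        · have : (a - j) < (s - j) := by omega
          rw [Nat.choose_eq_zero_of_lt this, Nat.choose_eq_zero_of_lt has]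
          ring
        · rw [Nat.choose_eq_zero_of_lt haj, Nat.choose_eq_zero_of_lt has]
          ring
    have := congrArg (fun t : ℕ => (t : ℤ)) key
    push_cast at this
    linear_combination ((-1 : ℤ) ^ j) * this
  rw [Finset.sum_congr rfl h1, ← Finset.mul_sum, Int.alternating_sum_range_choose]
  by_cases hs : s = 0 <;> simp [hs]

lemma key_alt (a b k : ℕ) :
    ∑ j ∈ Finset.range (k + 1), (-1 : ℤ) ^ j * (a.choose j : ℤ) * ((a + b - j).choose (k - j) : ℤ)
      = (b.choose k : ℤ) := by
  have step1 : ∀ j ∈ Finset.range (k + 1),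
      (-1 : ℤ) ^ j * (a.choose j : ℤ) * ((a + b - j).choose (k - j) : ℤ)
        = ∑ l ∈ Finset.range (k - j + 1),
            (-1 : ℤ) ^ j * (a.choose j : ℤ) * ((a - j).choose l : ℤ) * (b.choose (k - j - l) : ℤ) := by
    intro j hj
    rcases le_or_gt j a with hja | haj
    · have hsplit : a + b - j = (a - j) + b := by omega
      rw [hsplit, Nat.add_choose_eq, Finset.Nat.sum_antidiagonal_eq_sum_range_succ_mk]
      push_cast
      rw [Finset.mul_sum]
      exact Finset.sum_congr rfl fun l hl => by ring
    · rw [Nat.choose_eq_zero_of_lt haj]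
      simp
  rw [Finset.sum_congr rfl step1]
  have step2 : ∀ j ∈ Finset.range (k + 1),
      (∑ l ∈ Finset.range (k - j + 1),
        (-1 : ℤ) ^ j * (a.choose j : ℤ) * ((a - j).choose l : ℤ) * (b.choose (k - j - l) : ℤ))
      = ∑ s ∈ Finset.Ico j (k + 1),
        (-1 : ℤ) ^ j * (a.choose j : ℤ) * ((a - j).choose (s - j) : ℤ) * (b.choose (k - s) : ℤ) := by
    intro j hj
    rw [Finset.mem_range] at hj
    have hjk : j ≤ k := Nat.lt_succ_iff.mp hj
    rw [Finset.sum_Ico_eq_sum_range]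
    have hlen : k + 1 - j = k - j + 1 := by omega
    rw [hlen]
    refine Finset.sum_congr rfl fun l hl => ?_
    rw [Finset.mem_range] at hl
    have h1 : j + l - j = l := by omega
    have h2 : k - (j + l) = k - j - l := by omega
    rw [h1, h2]
  rw [Finset.sum_congr rfl step2]
  rw [Finset.range_eq_Ico,
    Finset.sum_Ico_Ico_comm 0 (k + 1)
      (fun j s => (-1 : ℤ) ^ j * (a.choose j : ℤ) * ((a - j).choose (s - j) : ℤ) * (b.choose (k - s) : ℤ))]
  have step3 : ∀ s ∈ Finset.Ico 0 (k + 1),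
      (∑ j ∈ Finset.Ico 0 (s + 1),
        (-1 : ℤ) ^ j * (a.choose j : ℤ) * ((a - j).choose (s - j) : ℤ) * (b.choose (k - s) : ℤ))
      = (if s = 0 then 1 else 0) * (b.choose (k - s) : ℤ) := by
    intro s hs
    rw [← Finset.range_eq_Ico, ← Finset.sum_mul, aux_alt]
  rw [Finset.sum_congr rfl step3, ← Finset.range_eq_Ico]
  have step4 : ∀ x ∈ Finset.range (k + 1),
      (if x = 0 then (1 : ℤ) else 0) * (b.choose (k - x) : ℤ)
        = if x = 0 then (b.choose (k - x) : ℤ) else 0 := by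
    intro x _; split <;> simp
  rw [Finset.sum_congr rfl step4,
    Finset.sum_ite_eq' (Finset.range (k + 1)) 0 (fun x => (b.choose (k - x) : ℤ))]
  simp

lemma T_lemma (a b i : ℕ) :
    ∑ j ∈ Finset.Icc 1 (i + 1), (-1 : ℤ) ^ j * (a.choose (j + 1) : ℤ) *
        ((a + b - j - 1).choose (i + 1 - j) : ℤ)
      = ((a + b).choose (i + 2) : ℤ) - (a : ℤ) * ((a + b - 1).choose (i + 1) : ℤ)
        - (b.choose (i + 2) : ℤ) := by
  have hk := key_alt a b (i + 2)
  rw [show i + 2 + 1 = i + 3 from rfl] at hk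
  have hsplit : ∑ j ∈ Finset.range (i + 3),
      (-1 : ℤ) ^ j * (a.choose j : ℤ) * ((a + b - j).choose (i + 2 - j) : ℤ)
      = (-1 : ℤ) ^ 0 * (a.choose 0 : ℤ) * ((a + b - 0).choose (i + 2 - 0) : ℤ)
        + (-1 : ℤ) ^ 1 * (a.choose 1 : ℤ) * ((a + b - 1).choose (i + 2 - 1) : ℤ)
        + ∑ j ∈ Finset.Ico 2 (i + 3),
            (-1 : ℤ) ^ j * (a.choose j : ℤ) * ((a + b - j).choose (i + 2 - j) : ℤ) := by
    rw [Finset.range_eq_Ico]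
    rw [Finset.sum_eq_sum_Ico_succ_bot (by omega : (0:ℕ) < i + 3)]
    rw [Finset.sum_eq_sum_Ico_succ_bot (by omega : (1:ℕ) < i + 3)]
    ring
  have hre : ∑ j ∈ Finset.Ico 2 (i + 3),
      (-1 : ℤ) ^ j * (a.choose j : ℤ) * ((a + b - j).choose (i + 2 - j) : ℤ)
      = - ∑ j ∈ Finset.Icc 1 (i + 1), (-1 : ℤ) ^ j * (a.choose (j + 1) : ℤ) *
          ((a + b - j - 1).choose (i + 1 - j) : ℤ) := by
    rw [show Finset.Icc 1 (i + 1) = Finset.Ico 1 (i + 2) from by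
      ext x; simp [Finset.mem_Icc, Finset.mem_Ico]; omega]
    rw [Finset.sum_Ico_eq_sum_range, Finset.sum_Ico_eq_sum_range, ← Finset.sum_neg_distrib]
    refine Finset.sum_congr (by congr 1 <;> omega) fun l hl => ?_
    have h1 : a + b - (2 + l) = a + b - (1 + l) - 1 := by omega
    have h2 : i + 2 - (2 + l) = i + 1 - (1 + l) := by omega
    have h3 : 2 + l = (1 + l) + 1 := by omega
    rw [h1, h2, h3, pow_succ]
    ring
  rw [hsplit, hre] at hk
  simp only [pow_zero, pow_one, Nat.choose_zero_right, Nat.choose_one_right, Nat.sub_zero,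
    Nat.cast_one, Nat.succ_sub_one, show i + 2 - 1 = i + 1 from rfl] at hk
  linarith [hk]

/-- The two formulas for the `i`-th total Betti number of the edge ideal of the
complete bipartite graph `K_{n,m}` agree:
`∑_{j+l=i+2, j,l ≥ 1} (n choose j)(m choose l)` equals
`∑_{j=1}^{i+1} (-1)^j ((n choose j+1) + (m choose j+1)) (n+m-j-1 choose i-j+1)
  + (i+1) (n+m choose i+2)`. -/
theorem betti_complete_bipartite_formula (n m i : ℕ) (hn : 1 ≤ n) (hm : 1 ≤ m) :
    ∑ q ∈ (Finset.HasAntidiagonal.antidiagonal (i + 2)).filter (fun q => 1 ≤ q.1 ∧ 1 ≤ q.2),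
        (n.choose q.1 : ℤ) * (m.choose q.2 : ℤ) =
      (∑ j ∈ Finset.Icc 1 (i + 1), (-1 : ℤ) ^ j *
          ((n.choose (j + 1) : ℤ) + (m.choose (j + 1) : ℤ)) *
          ((n + m - j - 1).choose (i + 1 - j) : ℤ)) +
        ((i : ℤ) + 1) * ((n + m).choose (i + 2) : ℤ) := by
  -- LHS computation
  have hLHS : ∑ q ∈ (Finset.HasAntidiagonal.antidiagonal (i + 2)).filter (fun q => 1 ≤ q.1 ∧ 1 ≤ q.2),
        (n.choose q.1 : ℤ) * (m.choose q.2 : ℤ)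
      = ((n + m).choose (i + 2) : ℤ) - (n.choose (i + 2) : ℤ) - (m.choose (i + 2) : ℤ) := by
    have hfull : ∑ q ∈ Finset.HasAntidiagonal.antidiagonal (i + 2), (n.choose q.1 : ℤ) * (m.choose q.2 : ℤ)
        = ((n + m).choose (i + 2) : ℤ) := by
      rw [Nat.add_choose_eq]
      push_cast
      rfl
    have hdecomp := Finset.sum_filter_add_sum_filter_not (Finset.HasAntidiagonal.antidiagonal (i + 2))
      (fun q : ℕ × ℕ => 1 ≤ q.1 ∧ 1 ≤ q.2) (fun q => (n.choose q.1 : ℤ) * (m.choose q.2 : ℤ))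
    have hnotset : (Finset.HasAntidiagonal.antidiagonal (i + 2)).filter (fun q => ¬(1 ≤ q.1 ∧ 1 ≤ q.2))
        = {((0 : ℕ), i + 2), (i + 2, 0)} := by
      ext ⟨x, y⟩
      simp only [Finset.mem_filter, Finset.HasAntidiagonal.mem_antidiagonal, Finset.mem_insert,
        Finset.mem_singleton, Prod.mk.injEq]
      omega
    have hnotsum : ∑ q ∈ (Finset.HasAntidiagonal.antidiagonal (i + 2)).filter (fun q => ¬(1 ≤ q.1 ∧ 1 ≤ q.2)),
        (n.choose q.1 : ℤ) * (m.choose q.2 : ℤ)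
        = (m.choose (i + 2) : ℤ) + (n.choose (i + 2) : ℤ) := by
      rw [hnotset]
      rw [Finset.sum_insert (by simp)]
      simp
    rw [hnotsum, hfull] at hdecomp
    linarith [hdecomp]
  -- RHS computation
  have hsplit : ∑ j ∈ Finset.Icc 1 (i + 1), (-1 : ℤ) ^ j *
          ((n.choose (j + 1) : ℤ) + (m.choose (j + 1) : ℤ)) *
          ((n + m - j - 1).choose (i + 1 - j) : ℤ)
      = (∑ j ∈ Finset.Icc 1 (i + 1), (-1 : ℤ) ^ j * (n.choose (j + 1) : ℤ) *
          ((n + m - j - 1).choose (i + 1 - j) : ℤ))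
        + ∑ j ∈ Finset.Icc 1 (i + 1), (-1 : ℤ) ^ j * (m.choose (j + 1) : ℤ) *
          ((m + n - j - 1).choose (i + 1 - j) : ℤ) := by
    rw [← Finset.sum_add_distrib]
    refine Finset.sum_congr rfl fun j hj => ?_
    rw [show m + n = n + m from Nat.add_comm m n]
    ring
  have hT1 := T_lemma n m i
  have hT2 := T_lemma m n i
  have hmul : ((n : ℤ) + (m : ℤ)) * ((n + m - 1).choose (i + 1) : ℤ)
      = ((i : ℤ) + 2) * ((n + m).choose (i + 2) : ℤ) := by
    have h1 : n + m - 1 + 1 = n + m := by omega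
    have h2 := Nat.add_one_mul_choose_eq (n + m - 1) (i + 1)
    rw [h1] at h2
    have h3 := congrArg (fun t : ℕ => (t : ℤ)) h2
    push_cast at h3
    push_cast
    linarith [h3]
  rw [hLHS, hsplit, hT1, hT2, Nat.add_comm m n]
  linarith [hmul]
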